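/- arXiv:1704.01995 — 4 statements merged into one kernel-verified Lean document; each statement's English description precedes it below -/
import Mathlib

section
/- For independent unit-mean exponential fading powers and a fixed transmission rate λ ≥ 0, the probability that the instantaneous secrecy rate exceeds λ is P(z1 > 2^λ·z2 + (2^λ − 1)/snr) = e^{−(2^λ − 1)/snr} / (2^λ + 1), for every snr > 0. -/
open MeasureTheory ProbabilityTheory Filter Set
open scoped ENNReal
set_option maxHeartbeats 1000000

lemma expMeasure_one_eq : expMeasure 1 = volume.withDensity (exponentialPDF 1) := rfl

lemma expMeasure_one_Iio_zero : expMeasure 1 (Iio 0) = 0 := by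
  rw [expMeasure_one_eq, withDensity_apply _ measurableSet_Iio]
  exact lintegral_exponentialPDF_of_nonpos le_rfl

lemma expMeasure_one_Ioi {a : ℝ} (ha : 0 ≤ a) :
    expMeasure 1 (Ioi a) = ENNReal.ofReal (Real.exp (-a)) := by
  haveI : IsProbabilityMeasure (expMeasure 1) := isProbabilityMeasure_expMeasure one_pos
  have hIic : expMeasure 1 (Iic a) = ENNReal.ofReal (1 - Real.exp (-a)) := by
    rw [expMeasure_one_eq, withDensity_apply _ measurableSet_Iic,
      lintegral_exponentialPDF_eq_antiDeriv one_pos, if_pos ha, one_mul]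
  rw [← Set.compl_Iic, measure_compl measurableSet_Iic (measure_ne_top _ _), measure_univ, hIic]
  have he : Real.exp (-a) ≤ 1 := Real.exp_le_one_iff.mpr (by linarith)
  rw [show (1 : ℝ≥0∞) = ENNReal.ofReal 1 by simp,
    ← ENNReal.ofReal_sub _ (by linarith [Real.exp_pos (-a)])]
  norm_num

/-- For independent unit-mean exponential fading powers and a fixed
transmission rate `lam ≥ 0`, the probability that the instantaneous secrecy rate
exceeds `lam` is
`P(z1 > 2^lam·z2 + (2^lam − 1)/snr) = e^{−(2^lam − 1)/snr} / (2^lam + 1)`,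
for every `snr > 0`. -/
theorem secrecy_outage_on_probability_exponential
    {Ω : Type*} [MeasurableSpace Ω] (μ : Measure Ω) [IsProbabilityMeasure μ]
    (z1 z2 : Ω → ℝ) (hz1m : Measurable z1) (hz2m : Measurable z2)
    (hindep : IndepFun z1 z2 μ)
    (hz1law : μ.map z1 = expMeasure 1)
    (hz2law : μ.map z2 = expMeasure 1)
    (lam : ℝ) (hlam : 0 ≤ lam) (snr : ℝ) (hsnr : 0 < snr) :
    (μ {ω | (2 : ℝ) ^ lam * z2 ω + ((2 : ℝ) ^ lam - 1) / snr < z1 ω}).toReal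
      = Real.exp (-(((2 : ℝ) ^ lam - 1) / snr)) / ((2 : ℝ) ^ lam + 1) := by
  haveI : IsProbabilityMeasure (expMeasure 1) := isProbabilityMeasure_expMeasure one_pos
  set c : ℝ := (2 : ℝ) ^ lam with hc
  set b : ℝ := (c - 1) / snr with hbdef
  have hc1 : 1 ≤ c := by
    rw [hc, ← Real.rpow_zero 2]
    exact Real.rpow_le_rpow_of_exponent_le one_le_two hlam
  have hcpos : 0 < c := lt_of_lt_of_le one_pos hc1
  have hb : 0 ≤ b := div_nonneg (by linarith) hsnr.le
  -- the event as a preimage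
  set S : Set (ℝ × ℝ) := {p : ℝ × ℝ | c * p.1 + b < p.2} with hS
  have hSm : MeasurableSet S :=
    measurableSet_lt ((measurable_fst.const_mul c).add_const b) measurable_snd
  have hmap : μ.map (fun ω => (z2 ω, z1 ω)) = (expMeasure 1).prod (expMeasure 1) := by
    refine ((ProbabilityTheory.indepFun_iff_map_prod_eq_prod_map_map
      hz2m.aemeasurable hz1m.aemeasurable).mp hindep.symm).trans ?_
    rw [hz2law, hz1law]
  have hev : {ω | c * z2 ω + b < z1 ω} = (fun ω => (z2 ω, z1 ω)) ⁻¹' S := rfl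
  have h1 : μ {ω | c * z2 ω + b < z1 ω} = ((expMeasure 1).prod (expMeasure 1)) S := by
    rw [hev, ← Measure.map_apply (hz2m.prodMk hz1m) hSm, hmap]
  have h2 : ((expMeasure 1).prod (expMeasure 1)) S
      = ∫⁻ x, expMeasure 1 (Ioi (c * x + b)) ∂(expMeasure 1) := by
    rw [Measure.prod_apply hSm]
    exact lintegral_congr fun x => rfl
  have hae : ∀ᵐ x ∂(expMeasure 1), 0 ≤ x := by
    rw [ae_iff]
    have : {x : ℝ | ¬ 0 ≤ x} = Iio 0 := by ext x; simp
    rw [this]; exact expMeasure_one_Iio_zero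
  have h3 : ∫⁻ x, expMeasure 1 (Ioi (c * x + b)) ∂(expMeasure 1)
      = ∫⁻ x, ENNReal.ofReal (Real.exp (-(c * x + b))) ∂(expMeasure 1) := by
    refine lintegral_congr_ae ?_
    filter_upwards [hae] with x hx
    exact expMeasure_one_Ioi (by positivity)
  have hgm : Measurable fun x : ℝ => ENNReal.ofReal (Real.exp (-(c * x + b))) := by
    fun_prop
  have h4 : ∫⁻ x, ENNReal.ofReal (Real.exp (-(c * x + b))) ∂(expMeasure 1)
      = ∫⁻ x, exponentialPDF 1 x * ENNReal.ofReal (Real.exp (-(c * x + b))) := by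
    have hpdfm : Measurable (exponentialPDF 1) := by
      unfold exponentialPDF
      exact (measurable_exponentialPDFReal 1).ennreal_ofReal
    rw [expMeasure_one_eq, lintegral_withDensity_eq_lintegral_mul _ hpdfm hgm]
    rfl
  have h5 : ∫⁻ x, exponentialPDF 1 x * ENNReal.ofReal (Real.exp (-(c * x + b)))
      = ∫⁻ x in Ioi 0, ENNReal.ofReal (Real.exp (-((1 + c) * x + b))) := by
    rw [← lintegral_add_compl
      (f := fun x => exponentialPDF 1 x * ENNReal.ofReal (Real.exp (-(c * x + b))))
      (measurableSet_Ici (a := (0:ℝ)))]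
    have hcompl : (Ici (0:ℝ))ᶜ = Iio 0 := compl_Ici
    have hz : ∫⁻ x in (Ici (0:ℝ))ᶜ,
        exponentialPDF 1 x * ENNReal.ofReal (Real.exp (-(c * x + b))) = 0 := by
      rw [hcompl]
      rw [setLIntegral_congr_fun_ae measurableSet_Iio
        (ae_of_all _ (fun x (hx : x < 0) => by
          rw [exponentialPDF_of_neg hx, zero_mul]))]
      simp
    rw [hz, add_zero]
    rw [← setLIntegral_congr (Ioi_ae_eq_Ici (a := (0:ℝ)))]
    refine setLIntegral_congr_fun_ae measurableSet_Ioi (ae_of_all _ (fun x hx => ?_))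
    have hx0 : (0:ℝ) ≤ x := le_of_lt hx
    rw [exponentialPDF_of_nonneg hx0, one_mul,
      ← ENNReal.ofReal_mul (le_of_lt (Real.exp_pos _)), ← Real.exp_add]
    ring_nf
  have hint : IntegrableOn (fun x => Real.exp (-((1 + c) * x + b))) (Ioi 0) := by
    have : (fun x => Real.exp (-((1 + c) * x + b)))
        = fun x => Real.exp (-b) * Real.exp (-(1 + c) * x) := by
      funext x; rw [← Real.exp_add]; ring_nf
    rw [this]
    exact (exp_neg_integrableOn_Ioi 0 (show (0:ℝ) < 1 + c by linarith)).const_mul _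
  have h6 : ∫⁻ x in Ioi 0, ENNReal.ofReal (Real.exp (-((1 + c) * x + b)))
      = ENNReal.ofReal (Real.exp (-b) / (1 + c)) := by
    rw [← ofReal_integral_eq_lintegral_ofReal hint
      (ae_of_all _ (fun x => le_of_lt (Real.exp_pos _)))]
    congr 1
    have heq : ∀ x : ℝ, Real.exp (-((1 + c) * x + b))
        = Real.exp (-b) * Real.exp (-((1 + c) * x)) := by
      intro x; rw [← Real.exp_add]; ring_nf
    rw [integral_congr_ae (ae_of_all _ (fun x => heq x)), MeasureTheory.integral_const_mul _ _]
    have := integral_comp_mul_left_Ioi (fun y => Real.exp (-y)) 0 (b := 1 + c) (by linarith)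
    simp only [mul_zero, integral_exp_neg_Ioi_zero, smul_eq_mul, mul_one] at this
    rw [this]
    field_simp
  rw [h1, h2, h3, h4, h5, h6, ENNReal.toReal_ofReal (by positivity)]
  rw [add_comm 1 c]
end

section
/- With no channel knowledge at the transmitter and fixed-rate transmission λ(snr) = a·snr/log_e 2 for a parameter a > 0, the energy per bit of the ON–OFF discrete Markov source satisfies lim_{snr→0⁺} snr / r(snr) = 2·log_e 2 / (a·e^{−a}); moreover 2·log_e 2/(a·e^{−a}) ≥ 2e·log_e 2 for every a > 0 with equality if and only if a = 1, so the minimum energy per bit equals 2e·log_e 2 = e(γ+1)·log_e 2 with γ = 1 and is independent of θ, p11, p22. -/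
open Real Filter Set


lemma slope_exp_lim (u : ℝ) :
    Tendsto (fun x : ℝ => (Real.exp (u*x) - 1)/x) (nhdsWithin 0 (Set.Ioi 0)) (nhds u) := by
  have h : HasDerivAt (fun x : ℝ => Real.exp (u*x)) u 0 := by
    have := ((hasDerivAt_id (0:ℝ)).const_mul u).exp
    simpa using this
  rw [hasDerivAt_iff_tendsto_slope] at h
  have h2 : Tendsto (slope (fun x : ℝ => Real.exp (u*x)) 0) (nhdsWithin 0 (Set.Ioi 0)) (nhds u) :=
    h.mono_left (nhdsWithin_mono _ (fun x hx => ne_of_gt hx))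
  refine h2.congr (fun x => ?_)
  simp [slope_def_field, div_eq_div_iff]

lemma phi_deriv (p11 p22 : ℝ) (hp11 : p11 ∈ Set.Ioo (0:ℝ) 1) :
    HasDerivAt (fun x : ℝ => Real.log ((1 - p11*x)/((1-p11-p22)*x^2 + p22*x)))
      (-(2 - p11 - p22)/(1 - p11)) 1 := by
  have h1 : (0:ℝ) < 1 - p11 := by linarith [hp11.2]
  have hn : HasDerivAt (fun x:ℝ => 1 - p11*x) (-p11) 1 := by
    simpa using ((hasDerivAt_id (1:ℝ)).const_mul p11).const_sub 1
  have hd : HasDerivAt (fun x:ℝ => (1-p11-p22)*x^2 + p22*x) (2*(1-p11-p22) + p22) 1 := by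
    have h2 : HasDerivAt (fun x:ℝ => x^2) (2*1) 1 := by
      simpa using hasDerivAt_pow 2 (1:ℝ)
    have := (h2.const_mul (1-p11-p22)).add ((hasDerivAt_id (1:ℝ)).const_mul p22)
    exact this.congr_deriv (by ring)
  have hdne : (1-p11-p22)*(1:ℝ)^2 + p22*1 ≠ 0 := by
    have : (1-p11-p22)*(1:ℝ)^2 + p22*1 = 1 - p11 := by ring
    rw [this]; exact ne_of_gt h1
  have hq := hn.div hd hdne
  have hqne : (1 - p11*(1:ℝ))/((1-p11-p22)*(1:ℝ)^2 + p22*1) ≠ 0 := by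
    rw [div_ne_zero_iff]
    exact ⟨by simpa using ne_of_gt h1, hdne⟩
  have := hq.log hqne
  refine this.congr_deriv ?_
  have h1ne : (1:ℝ) - p11 ≠ 0 := ne_of_gt h1
  simp only [Pi.div_apply]
  have e : (1 - p11 - p22) * (1:ℝ) ^ 2 + p22 * 1 = 1 - p11 := by ring
  rw [e, mul_one, div_self h1ne]
  field_simp
  ring

lemma bexp_lt (b : ℝ) (hb : 0 < b) (hne : b ≠ 1) :
    b * Real.exp (-b) < Real.exp (-1) := by
  have h := Real.add_one_lt_exp (x := b - 1) (by intro h; apply hne; linarith)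
  have h2 : b < Real.exp (b - 1) := by linarith
  have h3 : Real.exp (b-1) * Real.exp (-b) = Real.exp (-1) := by
    rw [← Real.exp_add]; ring_nf
  calc b * Real.exp (-b) < Real.exp (b-1) * Real.exp (-b) :=
        mul_lt_mul_of_pos_right h2 (Real.exp_pos _)
    _ = Real.exp (-1) := h3

/-- With no channel knowledge at the transmitter and fixed-rate
transmission `λ(snr) = a·snr/log 2` for a parameter `a > 0`, the energy per bit of the
ON–OFF discrete Markov source satisfies
`lim_{snr→0⁺} snr / r(snr) = 2·log 2 / (a·e^{−a})`; moreover
`2·log 2/(b·e^{−b}) ≥ 2e·log 2` for every `b > 0` with equality iff `b = 1`, so the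
minimum energy per bit equals `2e·log 2 = e(γ+1)·log 2` with `γ = 1` and is independent
of `θ`, `p11`, `p22`. -/
theorem no_CSI_min_energy_per_bit_discrete_markov
    (θ a p11 p22 : ℝ) (hθ : 0 < θ) (ha : 0 < a)
    (hp11 : p11 ∈ Set.Ioo (0 : ℝ) 1) (hp22 : p22 ∈ Set.Ioo (0 : ℝ) 1)
    (Pon : ℝ) (hPon : Pon = (1 - p11) / (2 - p11 - p22))
    (lam : ℝ → ℝ) (hlam : ∀ snr, lam snr = a * snr / Real.log 2)
    (P : ℝ → ℝ)
    (hP : ∀ snr, P snr =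
      Real.exp (-(((2 : ℝ) ^ lam snr - 1) / snr)) / ((2 : ℝ) ^ lam snr + 1))
    (g : ℝ → ℝ)
    (hg : ∀ snr, g snr = 1 - P snr * (1 - Real.exp (-θ * lam snr)))
    (r : ℝ → ℝ)
    (hr : ∀ snr, r snr = (Pon / θ) * Real.log
      ((1 - p11 * g snr) / ((1 - p11 - p22) * (g snr) ^ 2 + p22 * g snr))) :
    Filter.Tendsto (fun snr => snr / r snr) (nhdsWithin 0 (Set.Ioi 0))
      (nhds (2 * Real.log 2 / (a * Real.exp (-a)))) ∧
    (∀ b : ℝ, 0 < b →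
      2 * Real.exp 1 * Real.log 2 ≤ 2 * Real.log 2 / (b * Real.exp (-b)) ∧
      (2 * Real.log 2 / (b * Real.exp (-b)) = 2 * Real.exp 1 * Real.log 2 ↔ b = 1)) ∧
    2 * Real.exp 1 * Real.log 2 = Real.exp 1 * ((1 : ℝ) + 1) * Real.log 2 := by
  have hL2 : (0:ℝ) < Real.log 2 := Real.log_pos (by norm_num)
  have hL2ne : Real.log 2 ≠ 0 := ne_of_gt hL2
  have h1p : (0:ℝ) < 1 - p11 := by linarith [hp11.2]
  have h2p : (0:ℝ) < 2 - p11 - p22 := by linarith [hp11.2, hp22.2]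
  -- 2^(lam snr) = exp (a * snr)
  have h2pow : ∀ snr : ℝ, (2:ℝ) ^ lam snr = Real.exp (a * snr) := by
    intro snr
    rw [Real.rpow_def_of_pos (by norm_num : (0:ℝ) < 2), hlam]
    congr 1
    field_simp
  -- P tends to exp(-a)/2
  have hPlim : Tendsto P (nhdsWithin 0 (Set.Ioi 0)) (nhds (Real.exp (-a)/2)) := by
    have hnum : Tendsto (fun snr : ℝ => Real.exp (-((Real.exp (a*snr) - 1)/snr)))
        (nhdsWithin 0 (Set.Ioi 0)) (nhds (Real.exp (-a))) :=
      (Real.continuous_exp.tendsto _).comp (slope_exp_lim a).neg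
    have hden : Tendsto (fun snr : ℝ => Real.exp (a*snr) + 1)
        (nhdsWithin 0 (Set.Ioi 0)) (nhds 2) := by
      have h0 : Tendsto (fun snr : ℝ => Real.exp (a*snr) + 1) (nhds 0) (nhds (Real.exp (a*0) + 1)) :=
        ((Real.continuous_exp.comp (continuous_const.mul continuous_id)).add
          continuous_const).tendsto 0
      have he : Real.exp (a*0) + 1 = 2 := by norm_num
      rw [he] at h0
      exact h0.mono_left nhdsWithin_le_nhds
    have := hnum.div hden (by norm_num)
    refine this.congr (fun snr => ?_)
    simp only [Pi.div_apply]
    rw [hP, h2pow]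
  -- (1 - exp(-θ * lam snr))/snr → θ*a/log 2
  have hc : Tendsto (fun snr : ℝ => (1 - Real.exp (-θ * lam snr))/snr)
      (nhdsWithin 0 (Set.Ioi 0)) (nhds (θ*a/Real.log 2)) := by
    have h2 : Tendsto (fun x : ℝ => (1 - Real.exp (-(θ*a/Real.log 2)*x))/x)
        (nhdsWithin 0 (Set.Ioi 0)) (nhds (θ*a/Real.log 2)) := by
      have h := (slope_exp_lim (-(θ*a/Real.log 2))).neg
      rw [neg_neg] at h
      refine h.congr (fun x => ?_)
      rw [← neg_div, neg_sub]
    refine h2.congr (fun snr => ?_)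
    have hexp : -(θ*a/Real.log 2)*snr = -θ * lam snr := by
      rw [hlam]; ring
    rw [hexp]
  -- the product h := P * ((1-exp)/snr)
  have hh : Tendsto (fun snr : ℝ => P snr * ((1 - Real.exp (-θ * lam snr))/snr))
      (nhdsWithin 0 (Set.Ioi 0)) (nhds (Real.exp (-a)/2 * (θ*a/Real.log 2))) :=
    hPlim.mul hc
  -- g < 1 on Ioi 0
  have hglt : ∀ snr ∈ Set.Ioi (0:ℝ), g snr < 1 := by
    intro snr hsnr
    rw [hg]
    have hPpos : 0 < P snr := by
      rw [hP]
      exact div_pos (Real.exp_pos _) (by positivity)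
    have hs : (0:ℝ) < snr := hsnr
    have hlampos : 0 < θ * lam snr := by
      rw [hlam]; positivity
    have : Real.exp (-θ * lam snr) < 1 := by
      rw [Real.exp_lt_one_iff]; linarith
    nlinarith
  -- g tendsto 1 within Ioi, valued in {1}ᶜ
  have hglim : Tendsto g (nhdsWithin 0 (Set.Ioi 0)) (nhds 1) := by
    have hid : Tendsto (fun snr : ℝ => snr) (nhdsWithin 0 (Set.Ioi 0)) (nhds 0) :=
      tendsto_id.mono_left nhdsWithin_le_nhds
    have := hh.mul hid
    have h2 : Tendsto (fun snr : ℝ =>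
        1 - P snr * ((1 - Real.exp (-θ * lam snr))/snr) * snr)
        (nhdsWithin 0 (Set.Ioi 0)) (nhds (1 - Real.exp (-a)/2 * (θ*a/Real.log 2) * 0)) :=
      tendsto_const_nhds.sub this
    rw [mul_zero, sub_zero] at h2
    refine h2.congr' ?_
    filter_upwards [self_mem_nhdsWithin] with snr hsnr
    rw [hg]
    have hsne : snr ≠ 0 := ne_of_gt hsnr
    field_simp
  have hgwithin : Tendsto g (nhdsWithin 0 (Set.Ioi 0)) (nhdsWithin 1 {(1:ℝ)}ᶜ) := by
    rw [tendsto_nhdsWithin_iff]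
    refine ⟨hglim, ?_⟩
    filter_upwards [self_mem_nhdsWithin] with snr hsnr
    exact ne_of_lt (hglt snr hsnr)
  -- slope of Φ at 1 composed with g
  set Φ : ℝ → ℝ := fun x => Real.log ((1 - p11*x)/((1-p11-p22)*x^2 + p22*x)) with hΦ
  have hphi := phi_deriv p11 p22 hp11
  rw [hasDerivAt_iff_tendsto_slope] at hphi
  have hslopeg : Tendsto (fun snr => slope Φ 1 (g snr)) (nhdsWithin 0 (Set.Ioi 0))
      (nhds (-(2 - p11 - p22)/(1 - p11))) := hphi.comp hgwithin
  -- r/snr limit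
  have hrdiv : Tendsto (fun snr : ℝ => r snr / snr) (nhdsWithin 0 (Set.Ioi 0))
      (nhds (a * Real.exp (-a) / (2 * Real.log 2))) := by
    have hlim : Tendsto (fun snr : ℝ => (Pon/θ) * slope Φ 1 (g snr) *
        (-(P snr * ((1 - Real.exp (-θ * lam snr))/snr))))
        (nhdsWithin 0 (Set.Ioi 0))
        (nhds ((Pon/θ) * (-(2 - p11 - p22)/(1 - p11)) *
          (-(Real.exp (-a)/2 * (θ*a/Real.log 2))))) :=
      (tendsto_const_nhds.mul hslopeg).mul hh.neg
    have hval : (Pon/θ) * (-(2 - p11 - p22)/(1 - p11)) *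
        (-(Real.exp (-a)/2 * (θ*a/Real.log 2))) = a * Real.exp (-a) / (2 * Real.log 2) := by
      rw [hPon]
      field_simp
    rw [hval] at hlim
    refine hlim.congr' ?_
    filter_upwards [self_mem_nhdsWithin] with snr hsnr
    have hsne : (snr:ℝ) ≠ 0 := ne_of_gt hsnr
    have hg1 : g snr - 1 ≠ 0 := by
      have := hglt snr hsnr; intro h; apply ne_of_lt this; linarith
    have hΦ1 : Φ 1 = 0 := by
      rw [hΦ]
      simp only
      have : (1 - p11*(1:ℝ))/((1-p11-p22)*(1:ℝ)^2 + p22*1) = 1 := by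
        rw [div_eq_one_iff_eq (by intro h; nlinarith)]
        ring
      rw [this, Real.log_one]
    have hslope_eq : slope Φ 1 (g snr) = Φ (g snr) / (g snr - 1) := by
      rw [slope_def_field, hΦ1, sub_zero]
    have h1mg : P snr * ((1 - Real.exp (-θ * lam snr))/snr) = (1 - g snr)/snr := by
      rw [hg]; ring
    rw [hslope_eq, h1mg, hr]
    have : Φ (g snr) = Real.log ((1 - p11 * g snr) /
        ((1 - p11 - p22) * (g snr)^2 + p22 * g snr)) := rfl
    rw [← this]
    field_simp
    ring
  refine ⟨?_, ?_, by ring⟩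
  · have hMne : a * Real.exp (-a) / (2 * Real.log 2) ≠ 0 := by positivity
    have := hrdiv.inv₀ hMne
    rw [inv_div] at this
    refine this.congr (fun snr => ?_)
    rw [inv_div]
  · intro b hb
    have hbexp : 0 < b * Real.exp (-b) := by positivity
    have hle : b * Real.exp (-b) ≤ Real.exp (-1) := by
      rcases eq_or_ne b 1 with h | h
      · rw [h, one_mul]
      · exact le_of_lt (bexp_lt b hb h)
    have heq1 : 2 * Real.log 2 / Real.exp (-1) = 2 * Real.exp 1 * Real.log 2 := by
      rw [Real.exp_neg]
      field_simp
    constructor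
    · calc 2 * Real.exp 1 * Real.log 2 = 2 * Real.log 2 / Real.exp (-1) := heq1.symm
        _ ≤ 2 * Real.log 2 / (b * Real.exp (-b)) := by
            apply div_le_div_of_nonneg_left (by positivity) hbexp hle
    · constructor
      · intro heq
        by_contra hne
        have hlt := bexp_lt b hb hne
        have : 2 * Real.log 2 / Real.exp (-1) < 2 * Real.log 2 / (b * Real.exp (-b)) :=
          div_lt_div_of_pos_left (by positivity) hbexp hlt
        rw [heq1, heq] at this
        exact lt_irrefl _ this
      · intro h
        rw [h, one_mul, heq1]
end

section
/- With no channel knowledge at the transmitter and the optimal fixed rate λ(snr) = snr/log_e 2 (i.e., a = 1), the throughput r of the ON–OFF discrete Markov source is twice differentiable at snr = 0 and the wideband slope equals S₀ = −2·(r'(0))²·log_e 2 / r''(0) = 1 / (θ·(η − 1)/(2·log_e 2) + θ·e/log_e 2 + 2e), where η = (1 − p22)(p11 + p22)/((1 − p11)(2 − p11 − p22)). -/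
open Real Filter Set

section
open Topology

noncomputable def Efun (s : ℝ) : ℝ := if s = 0 then 1 else (Real.exp s - 1) / s
noncomputable def E1fun (s : ℝ) : ℝ := if s = 0 then 1/2 else ((s - 1) * Real.exp s + 1) / s ^ 2

lemma Efun_zero : Efun 0 = 1 := by simp [Efun]
lemma E1fun_zero : E1fun 0 = 1/2 := by simp [E1fun]

lemma exp_cubic_bound {s : ℝ} (hs : |s| ≤ 1) :
    |Real.exp s - (1 + s + s^2/2)| ≤ |s|^3 := by
  have h := Real.exp_bound hs (by norm_num : 0 < 3)
  have : (∑ i ∈ Finset.range 3, s ^ i / (Nat.factorial i)) = 1 + s + s^2/2 := by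
    simp [Finset.sum_range_succ, Nat.factorial]
  rw [this] at h
  calc |Real.exp s - (1 + s + s^2/2)| ≤ |s|^3 * ((3:ℕ).succ / ((Nat.factorial 3) * 3)) := h
    _ ≤ |s|^3 := by
        have : ((3:ℕ).succ / ((Nat.factorial 3:ℕ) * 3) : ℝ) ≤ 1 := by norm_num [Nat.factorial]
        nlinarith [pow_nonneg (abs_nonneg s) 3]

lemma exp_quintic_bound {s : ℝ} (hs : |s| ≤ 1) :
    |Real.exp s - (1 + s + s^2/2 + s^3/6 + s^4/24)| ≤ |s|^5 := by
  have h := Real.exp_bound hs (by norm_num : 0 < 5)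
  have : (∑ i ∈ Finset.range 5, s ^ i / (Nat.factorial i)) = 1 + s + s^2/2 + s^3/6 + s^4/24 := by
    simp [Finset.sum_range_succ, Nat.factorial]
  rw [this] at h
  calc |Real.exp s - (1 + s + s^2/2 + s^3/6 + s^4/24)|
      ≤ |s|^5 * ((5:ℕ).succ / ((Nat.factorial 5) * 5)) := h
    _ ≤ |s|^5 := by
        have : ((5:ℕ).succ / ((Nat.factorial 5:ℕ) * 5) : ℝ) ≤ 1 := by norm_num [Nat.factorial]
        nlinarith [pow_nonneg (abs_nonneg s) 5]

lemma hasDerivAt_Efun_zero : HasDerivAt Efun (1/2) 0 := by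
  rw [hasDerivAt_iff_tendsto_slope]
  have key : ∀ᶠ s in 𝓝[≠] (0:ℝ), slope Efun 0 s - 1/2
      = (Real.exp s - (1 + s + s^2/2)) / s^2 := by
    filter_upwards [self_mem_nhdsWithin] with s hs
    have hs : s ≠ 0 := hs
    rw [slope_def_field, Efun, Efun]
    simp only [if_neg hs, if_pos rfl, eq_self_iff_true, if_true]
    field_simp
    ring
  have h0 : Tendsto (fun s => slope Efun 0 s - 1/2) (𝓝[≠] (0:ℝ)) (𝓝 0) := by
    refine squeeze_zero_norm' (a := fun s : ℝ => |s|) ?_ ?_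
    · filter_upwards [key, self_mem_nhdsWithin,
        eventually_nhdsWithin_of_eventually_nhds (eventually_abs_sub_lt (0:ℝ) one_pos)]
        with s hk hs h1
      have hs : s ≠ 0 := hs
      rw [Real.norm_eq_abs, hk, abs_div, div_le_iff₀ (by positivity)]
      have h1 : |s| ≤ 1 := by simpa using h1.le
      calc |Real.exp s - (1 + s + s^2/2)| ≤ |s|^3 := exp_cubic_bound h1
        _ = |s| * |s ^ 2| := by rw [abs_pow]; ring
    · simpa using (continuous_abs.tendsto' (0:ℝ) 0 abs_zero).mono_left nhdsWithin_le_nhds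
  have := h0.add (tendsto_const_nhds (x := (1/2:ℝ)))
  simpa using this

lemma hasDerivAt_E1fun_zero : HasDerivAt E1fun (1/3) 0 := by
  rw [hasDerivAt_iff_tendsto_slope]
  have key : ∀ᶠ s in 𝓝[≠] (0:ℝ), slope E1fun 0 s - 1/3
      = s/8 + s^2/24 + (s - 1) * (Real.exp s - (1 + s + s^2/2 + s^3/6 + s^4/24)) / s^3 := by
    filter_upwards [self_mem_nhdsWithin] with s hs
    have hs : s ≠ 0 := hs
    rw [slope_def_field, E1fun, E1fun]
    simp only [if_neg hs, if_pos rfl, eq_self_iff_true, if_true]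
    field_simp
    ring
  have h0 : Tendsto (fun s => slope E1fun 0 s - 1/3) (𝓝[≠] (0:ℝ)) (𝓝 0) := by
    have hmain : Tendsto (fun s : ℝ => s/8 + s^2/24
        + (s - 1) * (Real.exp s - (1 + s + s^2/2 + s^3/6 + s^4/24)) / s^3) (𝓝[≠] (0:ℝ)) (𝓝 0) := by
      have h1 : Tendsto (fun s : ℝ => s/8 + s^2/24) (𝓝[≠] (0:ℝ)) (𝓝 0) := by
        have : Continuous (fun s : ℝ => s/8 + s^2/24) := by continuity
        simpa using (this.tendsto' 0 0 (by norm_num)).mono_left nhdsWithin_le_nhds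
      have h2 : Tendsto (fun s : ℝ =>
          (s - 1) * (Real.exp s - (1 + s + s^2/2 + s^3/6 + s^4/24)) / s^3) (𝓝[≠] (0:ℝ)) (𝓝 0) := by
        refine squeeze_zero_norm' (a := fun s : ℝ => 2 * s^2) ?_ ?_
        · filter_upwards [self_mem_nhdsWithin,
            eventually_nhdsWithin_of_eventually_nhds (eventually_abs_sub_lt (0:ℝ) one_pos)]
            with s hs h1
          have hs : s ≠ 0 := hs
          have h1 : |s| ≤ 1 := by simpa using h1.le
          rw [Real.norm_eq_abs, abs_div, abs_mul]
          have hb := exp_quintic_bound h1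
          have hs1 : |s - 1| ≤ 2 := by
            calc |s - 1| ≤ |s| + 1 := by simpa using abs_sub (s) (1:ℝ)
              _ ≤ 2 := by linarith
          have hpos : (0:ℝ) < |s^3| := by positivity
          rw [div_le_iff₀ hpos]
          calc |s - 1| * |Real.exp s - (1 + s + s^2/2 + s^3/6 + s^4/24)|
              ≤ 2 * |s|^5 := by
                apply mul_le_mul hs1 hb (abs_nonneg _) (by norm_num)
            _ ≤ 2 * s^2 * |s^3| := by
                have h5 : |s|^5 = s^2 * |s^3| := by
                  rw [abs_pow, ← sq_abs s]; ring
                rw [h5]; ring_nf; exact le_rfl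
        · have : Continuous (fun s : ℝ => 2 * s^2) := by continuity
          simpa using (this.tendsto' 0 0 (by norm_num)).mono_left nhdsWithin_le_nhds
      simpa using h1.add h2
    exact Tendsto.congr' (key.mono fun s h => h.symm) hmain
  have := h0.add (tendsto_const_nhds (x := (1/3:ℝ)))
  simpa using this

lemma hasDerivAt_Efun (s : ℝ) : HasDerivAt Efun (E1fun s) s := by
  rcases eq_or_ne s 0 with rfl | hs
  · simpa [E1fun_zero] using hasDerivAt_Efun_zero
  · have hev : Efun =ᶠ[𝓝 s] fun t => (Real.exp t - 1) / t := by
      filter_upwards [isOpen_ne.mem_nhds hs] with t ht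
      simp [Efun, if_neg ht]
    have hd : HasDerivAt (fun t => (Real.exp t - 1) / t)
        ((Real.exp s * s - (Real.exp s - 1) * 1) / s ^ 2) s :=
      ((Real.hasDerivAt_exp s).sub_const 1).div (hasDerivAt_id s) hs
    have : HasDerivAt (fun t => (Real.exp t - 1) / t) (E1fun s) s := by
      convert hd using 1
      rw [E1fun, if_neg hs]; ring
    exact this.congr_of_eventuallyEq hev

noncomputable def wfun (c s : ℝ) : ℝ :=
  Real.exp (-(Efun s)) * (1 - Real.exp (-(c*s))) / (Real.exp s + 1)

noncomputable def wdfun (c s : ℝ) : ℝ :=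
  ((Real.exp (-(Efun s)) * (-(E1fun s)) * (1 - Real.exp (-(c*s)))
      + Real.exp (-(Efun s)) * (Real.exp (-(c*s)) * c)) * (Real.exp s + 1)
    - Real.exp (-(Efun s)) * (1 - Real.exp (-(c*s))) * Real.exp s) / (Real.exp s + 1)^2

lemma wfun_zero (c : ℝ) : wfun c 0 = 0 := by simp [wfun]

lemma wdfun_zero (c : ℝ) : wdfun c 0 = Real.exp (-1) * c / 2 := by
  simp [wdfun, Efun_zero, E1fun_zero, Real.exp_zero]
  ring

lemma cf_ne (s : ℝ) : Real.exp s + 1 ≠ 0 := by positivity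

lemma hasDerivAt_expEfun (s : ℝ) :
    HasDerivAt (fun t => Real.exp (-(Efun t))) (Real.exp (-(Efun s)) * (-(E1fun s))) s :=
  ((hasDerivAt_Efun s).neg).exp

lemma hasDerivAt_Bfun (c s : ℝ) :
    HasDerivAt (fun t => 1 - Real.exp (-(c*t))) (Real.exp (-(c*s)) * c) s := by
  have h : HasDerivAt (fun t => Real.exp (-(c*t))) (Real.exp (-(c*s)) * -(c*1)) s :=
    (((hasDerivAt_id s).const_mul c).neg).exp
  have := h.const_sub 1
  refine this.congr_deriv ?_
  ring

lemma hasDerivAt_Cfun (s : ℝ) :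
    HasDerivAt (fun t => Real.exp t + 1) (Real.exp s) s :=
  (Real.hasDerivAt_exp s).add_const 1

lemma hasDerivAt_wfun (c s : ℝ) : HasDerivAt (wfun c) (wdfun c s) s := by
  have hu : HasDerivAt (fun t => Real.exp (-(Efun t)) * (1 - Real.exp (-(c*t))))
      (Real.exp (-(Efun s)) * (-(E1fun s)) * (1 - Real.exp (-(c*s)))
        + Real.exp (-(Efun s)) * (Real.exp (-(c*s)) * c)) s :=
    (hasDerivAt_expEfun s).mul (hasDerivAt_Bfun c s)
  exact hu.div (hasDerivAt_Cfun s) (cf_ne s)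

lemma hasDerivAt_wdfun_zero (c : ℝ) :
    HasDerivAt (wdfun c) (-(Real.exp (-1) * c) - Real.exp (-1) * c^2/2) 0 := by
  -- numerator and denominator of wdfun
  have hA := hasDerivAt_expEfun 0
  have hA' : HasDerivAt (fun t => Real.exp (-(Efun t)) * (-(E1fun t)))
      (Real.exp (-(Efun 0)) * (-(E1fun 0)) * (-(E1fun 0)) + Real.exp (-(Efun 0)) * (-(1/3))) 0 :=
    (hasDerivAt_expEfun 0).mul hasDerivAt_E1fun_zero.neg
  have hB := hasDerivAt_Bfun c 0
  have hB' : HasDerivAt (fun t => Real.exp (-(c*t)) * c)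
      ((Real.exp (-(c*0)) * -(c*1)) * c) 0 :=
    ((((hasDerivAt_id 0).const_mul c).neg).exp).mul_const c
  have hC := hasDerivAt_Cfun 0
  have hn : HasDerivAt (fun t => (Real.exp (-(Efun t)) * (-(E1fun t)) * (1 - Real.exp (-(c*t)))
      + Real.exp (-(Efun t)) * (Real.exp (-(c*t)) * c)) * (Real.exp t + 1)
    - Real.exp (-(Efun t)) * (1 - Real.exp (-(c*t))) * Real.exp t)
      (((Real.exp (-(Efun 0)) * (-(E1fun 0)) * (-(E1fun 0)) + Real.exp (-(Efun 0)) * (-(1/3)))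
          * (1 - Real.exp (-(c*0)))
        + Real.exp (-(Efun 0)) * (-(E1fun 0)) * (Real.exp (-(c*0)) * c)
        + ((Real.exp (-(Efun 0)) * (-(E1fun 0))) * (Real.exp (-(c*0)) * c)
          + Real.exp (-(Efun 0)) * ((Real.exp (-(c*0)) * -(c*1)) * c))) * (Real.exp 0 + 1)
      + (Real.exp (-(Efun 0)) * (-(E1fun 0)) * (1 - Real.exp (-(c*0)))
        + Real.exp (-(Efun 0)) * (Real.exp (-(c*0)) * c)) * Real.exp 0
      - ((Real.exp (-(Efun 0)) * (-(E1fun 0)) * (1 - Real.exp (-(c*0)))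
          + Real.exp (-(Efun 0)) * (Real.exp (-(c*0)) * c)) * Real.exp 0
        + Real.exp (-(Efun 0)) * (1 - Real.exp (-(c*0))) * Real.exp 0)) 0 := by
    have h1 := ((hA'.mul hB).add (hA.mul hB')).mul hC
    have h2 := ((hA.mul hB).mul (Real.hasDerivAt_exp 0))
    exact h1.sub h2
  have hm : HasDerivAt (fun t => (Real.exp t + 1)^2)
      ((2:ℕ) * (Real.exp 0 + 1)^(2-1) * Real.exp 0) 0 := hC.pow 2
  have hdiv := hn.div hm (by positivity)
  have : wdfun c = fun t => ((Real.exp (-(Efun t)) * (-(E1fun t)) * (1 - Real.exp (-(c*t)))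
      + Real.exp (-(Efun t)) * (Real.exp (-(c*t)) * c)) * (Real.exp t + 1)
    - Real.exp (-(Efun t)) * (1 - Real.exp (-(c*t))) * Real.exp t) / (Real.exp t + 1)^2 := rfl
  rw [this]
  refine hdiv.congr_deriv ?_
  simp only [Efun_zero, E1fun_zero, mul_zero, neg_zero, Real.exp_zero]
  field_simp
  ring

noncomputable def ggfun (c s : ℝ) : ℝ := 1 - wfun c s
noncomputable def Nfun (p11 c s : ℝ) : ℝ := 1 - p11 * ggfun c s
noncomputable def Dfun (p11 p22 c s : ℝ) : ℝ :=
  (1 - p11 - p22) * ggfun c s ^ 2 + p22 * ggfun c s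
noncomputable def Ffun (K p11 p22 c : ℝ) (s : ℝ) : ℝ :=
  K * (p11 * wdfun c s / Nfun p11 c s
    + (2 * (1 - p11 - p22) * ggfun c s + p22) * wdfun c s / Dfun p11 p22 c s)

lemma ggfun_zero (c : ℝ) : ggfun c 0 = 1 := by simp [ggfun, wfun_zero]
lemma Nfun_zero (p11 c : ℝ) : Nfun p11 c 0 = 1 - p11 := by simp [Nfun, ggfun_zero]
lemma Dfun_zero (p11 p22 c : ℝ) : Dfun p11 p22 c 0 = 1 - p11 := by
  simp [Dfun, ggfun_zero]

lemma hasDerivAt_ggfun (c s : ℝ) : HasDerivAt (ggfun c) (-(wdfun c s)) s :=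
  (hasDerivAt_wfun c s).const_sub 1

lemma hasDerivAt_Nfun (p11 c s : ℝ) :
    HasDerivAt (Nfun p11 c) (p11 * wdfun c s) s := by
  have := ((hasDerivAt_ggfun c s).const_mul p11).const_sub 1
  refine this.congr_deriv ?_
  ring

lemma hasDerivAt_Dfun (p11 p22 c s : ℝ) :
    HasDerivAt (Dfun p11 p22 c) (-((2 * (1 - p11 - p22) * ggfun c s + p22) * wdfun c s)) s := by
  have h1 := ((hasDerivAt_ggfun c s).pow 2).const_mul (1 - p11 - p22)
  have h2 := (hasDerivAt_ggfun c s).const_mul p22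
  have := h1.add h2
  refine this.congr_deriv ?_
  push_cast
  ring

lemma hasDerivAt_logND (K p11 p22 c s : ℝ)
    (hN : Nfun p11 c s ≠ 0) (hD : Dfun p11 p22 c s ≠ 0) :
    HasDerivAt (fun t => K * Real.log (Nfun p11 c t / Dfun p11 p22 c t))
      (Ffun K p11 p22 c s) s := by
  have hq := (hasDerivAt_Nfun p11 c s).div (hasDerivAt_Dfun p11 p22 c s) hD
  have hlog := hq.log (div_ne_zero hN hD)
  have h := hlog.const_mul K
  refine h.congr_deriv ?_
  simp only [Pi.div_apply]
  unfold Ffun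
  field_simp
  ring

lemma hasDerivAt_Ffun_zero (K p11 p22 c : ℝ) (h1 : 1 - p11 ≠ 0) :
    HasDerivAt (Ffun K p11 p22 c)
      (K * (p11 * (-(Real.exp (-1) * c) - Real.exp (-1) * c^2/2) / (1 - p11)
        - p11^2 * (Real.exp (-1) * c / 2)^2 / (1 - p11)^2
        + (-2 * (1 - p11 - p22) * (Real.exp (-1) * c / 2)^2
            + (2 * (1 - p11 - p22) + p22) * (-(Real.exp (-1) * c) - Real.exp (-1) * c^2/2))
          / (1 - p11)
        + (2 * (1 - p11 - p22) + p22)^2 * (Real.exp (-1) * c / 2)^2 / (1 - p11)^2)) 0 := by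
  have hwd := hasDerivAt_wdfun_zero c
  have hgg' := hasDerivAt_ggfun c 0
  have hN' := hasDerivAt_Nfun p11 c 0
  have hD' := hasDerivAt_Dfun p11 p22 c 0
  have hNne : Nfun p11 c 0 ≠ 0 := by rw [Nfun_zero]; exact h1
  have hDne : Dfun p11 p22 c 0 ≠ 0 := by rw [Dfun_zero]; exact h1
  have t1 := (hwd.const_mul p11).div hN' hNne
  have inner := ((hgg'.const_mul (2 * (1 - p11 - p22))).add_const p22).mul hwd
  have t2 := inner.div hD' hDne
  have h := (t1.add t2).const_mul K
  refine h.congr_deriv ?_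
  simp only [Pi.mul_apply]
  rw [Nfun_zero, Dfun_zero, wdfun_zero, ggfun_zero]
  field_simp
  ring

end

set_option maxHeartbeats 1000000 in
/-- With no channel knowledge at the transmitter and the optimal fixed
rate `λ(snr) = snr/log 2` (i.e. `a = 1`), the throughput `r` of the ON–OFF discrete
Markov source is twice differentiable (from the right) at `snr = 0` and the wideband
slope equals
`S₀ = −2·(r'(0))²·log 2 / r''(0) = 1 / (θ·(η − 1)/(2·log 2) + θ·e/log 2 + 2e)`,
where `η = (1 − p22)(p11 + p22)/((1 − p11)(2 − p11 − p22))`. -/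
theorem no_CSI_wideband_slope_discrete_markov
    (θ p11 p22 : ℝ) (hθ : 0 < θ)
    (hp11 : p11 ∈ Set.Ioo (0 : ℝ) 1) (hp22 : p22 ∈ Set.Ioo (0 : ℝ) 1)
    (Pon : ℝ) (hPon : Pon = (1 - p11) / (2 - p11 - p22))
    (η : ℝ) (hη : η = (1 - p22) * (p11 + p22) / ((1 - p11) * (2 - p11 - p22)))
    (lam : ℝ → ℝ) (hlam : ∀ snr, lam snr = snr / Real.log 2)
    (P : ℝ → ℝ)
    (hP : ∀ snr, P snr =
      Real.exp (-(((2 : ℝ) ^ lam snr - 1) / snr)) / ((2 : ℝ) ^ lam snr + 1))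
    (g : ℝ → ℝ)
    (hg : ∀ snr, g snr = 1 - P snr * (1 - Real.exp (-θ * lam snr)))
    (r : ℝ → ℝ)
    (hr : ∀ snr, r snr = (Pon / θ) * Real.log
      ((1 - p11 * g snr) / ((1 - p11 - p22) * (g snr) ^ 2 + p22 * g snr))) :
    ∃ r' : ℝ → ℝ, ∃ d2 : ℝ,
      (∀ᶠ snr in nhdsWithin 0 (Set.Ici 0), HasDerivWithinAt r (r' snr) (Set.Ici 0) snr) ∧
      HasDerivWithinAt r' d2 (Set.Ici 0) 0 ∧
      -2 * (r' 0) ^ 2 * Real.log 2 / d2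
        = 1 / (θ * (η - 1) / (2 * Real.log 2)
            + θ * Real.exp 1 / Real.log 2 + 2 * Real.exp 1) := by
  obtain ⟨hp111, hp112⟩ := hp11
  obtain ⟨hp221, hp222⟩ := hp22
  have hL : (0:ℝ) < Real.log 2 := Real.log_pos one_lt_two
  set c := θ / Real.log 2 with hc
  have hcpos : 0 < c := div_pos hθ hL
  have hq1 : (0:ℝ) < 1 - p11 := by linarith
  have hq2 : (0:ℝ) < 2 - p11 - p22 := by linarith
  -- r coincides with the smooth model
  have hgw : ∀ s, g s = ggfun c s := by
    intro s
    rcases eq_or_ne s 0 with rfl | hs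
    · rw [hg, hlam]
      simp [ggfun, wfun_zero]
    · rw [hg, hP, hlam]
      have h2 : (2:ℝ) ^ (s / Real.log 2) = Real.exp s := by
        rw [Real.rpow_def_of_pos (by norm_num : (0:ℝ) < 2)]
        congr 1
        field_simp
      rw [h2]
      have harg : -θ * (s / Real.log 2) = -(c * s) := by rw [hc]; ring
      rw [harg]
      unfold ggfun wfun Efun
      rw [if_neg hs]
      ring
  have hrH : r = fun s => (Pon / θ) * Real.log (Nfun p11 c s / Dfun p11 p22 c s) := by
    funext s
    rw [hr, hgw]
    rfl
  -- positivity near 0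
  have hN0 : (0:ℝ) < Nfun p11 c 0 := by rw [Nfun_zero]; linarith
  have hD0 : (0:ℝ) < Dfun p11 p22 c 0 := by rw [Dfun_zero]; linarith
  have hevN : ∀ᶠ s in nhds (0:ℝ), 0 < Nfun p11 c s :=
    (hasDerivAt_Nfun p11 c 0).continuousAt.eventually (eventually_gt_nhds hN0)
  have hevD : ∀ᶠ s in nhds (0:ℝ), 0 < Dfun p11 p22 c s :=
    (hasDerivAt_Dfun p11 p22 c 0).continuousAt.eventually (eventually_gt_nhds hD0)
  refine ⟨Ffun (Pon/θ) p11 p22 c,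
    (Pon/θ) * (p11 * (-(Real.exp (-1) * c) - Real.exp (-1) * c^2/2) / (1 - p11)
        - p11^2 * (Real.exp (-1) * c / 2)^2 / (1 - p11)^2
        + (-2 * (1 - p11 - p22) * (Real.exp (-1) * c / 2)^2
            + (2 * (1 - p11 - p22) + p22) * (-(Real.exp (-1) * c) - Real.exp (-1) * c^2/2))
          / (1 - p11)
        + (2 * (1 - p11 - p22) + p22)^2 * (Real.exp (-1) * c / 2)^2 / (1 - p11)^2), ?_, ?_, ?_⟩
  · rw [hrH]
    filter_upwards [(hevN.and hevD).filter_mono nhdsWithin_le_nhds] with s hs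
    exact (hasDerivAt_logND (Pon/θ) p11 p22 c s hs.1.ne' hs.2.ne').hasDerivWithinAt
  · exact (hasDerivAt_Ffun_zero (Pon/θ) p11 p22 c hq1.ne').hasDerivWithinAt
  · -- the algebraic identity for the wideband slope
    have hE1 : (0:ℝ) < Real.exp 1 := Real.exp_pos 1
    have he2 : (2:ℝ) ≤ Real.exp 1 := by
      have := Real.add_one_le_exp (1:ℝ)
      linarith
    have hx : (0:ℝ) < Real.exp (-1) := Real.exp_pos _
    have hx1 : Real.exp (-1:ℝ) < 1 := Real.exp_lt_one_iff.mpr (by norm_num)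
    have hηpos : 0 < η := by
      rw [hη]
      exact div_pos (mul_pos (by linarith) (by linarith)) (mul_pos hq1 hq2)
    have hF0 : Ffun (Pon/θ) p11 p22 c 0 = 1 / (2 * Real.exp 1 * Real.log 2) := by
      unfold Ffun
      rw [Nfun_zero, Dfun_zero, wdfun_zero, ggfun_zero, hPon, hc, Real.exp_neg]
      field_simp
      ring
    have hd2eq : (Pon/θ) * (p11 * (-(Real.exp (-1) * c) - Real.exp (-1) * c^2/2) / (1 - p11)
        - p11^2 * (Real.exp (-1) * c / 2)^2 / (1 - p11)^2
        + (-2 * (1 - p11 - p22) * (Real.exp (-1) * c / 2)^2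
            + (2 * (1 - p11 - p22) + p22) * (-(Real.exp (-1) * c) - Real.exp (-1) * c^2/2))
          / (1 - p11)
        + (2 * (1 - p11 - p22) + p22)^2 * (Real.exp (-1) * c / 2)^2 / (1 - p11)^2)
        = ((-(Real.exp (-1) * c) - Real.exp (-1) * c^2/2)
            - (η - 1) * (Real.exp (-1) * c / 2)^2) / θ := by
      rw [hPon, hη]
      field_simp
      ring
    rw [hd2eq, hF0]
    have hnum : (-(Real.exp (-1) * c) - Real.exp (-1) * c^2/2)
        - (η - 1) * (Real.exp (-1) * c / 2)^2 < 0 := by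
      nlinarith [mul_pos hx hcpos, mul_pos (mul_pos hx hx) (mul_pos hcpos hcpos),
        mul_pos hηpos (mul_pos (mul_pos hx hx) (mul_pos hcpos hcpos)),
        mul_pos (mul_pos hx hcpos) hcpos]
    have hd2ne : ((-(Real.exp (-1) * c) - Real.exp (-1) * c^2/2)
        - (η - 1) * (Real.exp (-1) * c / 2)^2) / θ ≠ 0 :=
      (div_neg_of_neg_of_pos hnum hθ).ne
    have hDpos : 0 < θ * (η - 1) / (2 * Real.log 2)
        + θ * Real.exp 1 / Real.log 2 + 2 * Real.exp 1 := by
      have heq : θ * (η - 1) / (2 * Real.log 2) + θ * Real.exp 1 / Real.log 2 + 2 * Real.exp 1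
          = (θ * (η - 1) + 2 * θ * Real.exp 1 + 4 * Real.exp 1 * Real.log 2)
            / (2 * Real.log 2) := by
        field_simp
        ring
      rw [heq]
      apply div_pos _ (by positivity)
      have h2e : θ * 2 ≤ θ * Real.exp 1 := mul_le_mul_of_nonneg_left he2 hθ.le
      have h3 : (0:ℝ) < Real.exp 1 * Real.log 2 := mul_pos hE1 hL
      nlinarith [mul_pos hθ hηpos]
    rw [div_eq_div_iff hd2ne hDpos.ne']
    rw [hc, Real.exp_neg]
    field_simp
    ring
end

section
/- With no channel knowledge at the transmitter and the optimal fixed rate λ(snr) = snr/log_e 2, the ON–OFF Markov fluid source achieves minimum energy per bit lim_{snr→0⁺} snr / r(snr) = 2e·log_e 2, and the throughput r is twice differentiable at snr = 0 with wideband slope S₀ = −2·(r'(0))²·log_e 2 / r''(0) = 1 / (θ·(ζ − 1)/(2·log_e 2) + θ·e/log_e 2 + 2e), where ζ = 2β/(α(α + β)). -/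
open Real Filter Set Topology
lemma lim_log_one_sub : Tendsto (fun t : ℝ => Real.log (1 - t)/t) (𝓝[≠] (0:ℝ)) (𝓝 (-1)) := by
  have h : HasDerivAt (fun t : ℝ => Real.log (1 - t)) (-1) 0 := by
    have h1 : HasDerivAt (fun t : ℝ => 1 - t) (-1) 0 := by
      simpa using (hasDerivAt_id (0:ℝ)).const_sub 1
    have := (Real.hasDerivAt_log (by norm_num : (1:ℝ) - 0 ≠ 0)).comp 0 h1
    norm_num at this; exact this
  rw [hasDerivAt_iff_tendsto_slope] at h
  simpa [slope_fun_def, div_eq_inv_mul] using h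

lemma lim_exp_sub_one_div : Tendsto (fun t : ℝ => (Real.exp t - 1)/t) (𝓝[≠] (0:ℝ)) (𝓝 1) := by
  have h := (Real.hasDerivAt_exp 0)
  rw [hasDerivAt_iff_tendsto_slope] at h
  simpa [slope_fun_def, Real.exp_zero, div_eq_inv_mul] using h

lemma lim_exp_sub_one_div' : Tendsto (fun t : ℝ => (Real.exp t - 1)/t) (𝓝[>] (0:ℝ)) (𝓝 1) :=
  lim_exp_sub_one_div.mono_left (nhdsWithin_mono _ fun x hx => ne_of_gt hx)

lemma lim_K2 : Tendsto (fun s : ℝ => (Real.exp s - 1 - s)/s^2) (𝓝[>] (0:ℝ)) (𝓝 (1/2)) := by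
  apply HasDerivAt.lhopital_zero_nhdsGT (f' := fun s => Real.exp s - 1) (g' := fun s => 2*s)
  · filter_upwards with x
    exact ((Real.hasDerivAt_exp x).sub_const 1).sub (hasDerivAt_id x)
  · filter_upwards with x
    simpa [mul_comm] using (hasDerivAt_pow 2 x)
  · filter_upwards [self_mem_nhdsWithin] with x hx
    have : (0:ℝ) < x := hx
    positivity
  · have h : Continuous fun s : ℝ => Real.exp s - 1 - s := by continuity
    have := h.tendsto 0
    simp only [Real.exp_zero] at this
    norm_num at this
    exact this.mono_left nhdsWithin_le_nhds
  · have : Tendsto (fun s : ℝ => s^2) (𝓝 (0:ℝ)) (𝓝 0) := by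
      simpa using (continuous_pow 2).tendsto (0:ℝ)
    exact this.mono_left nhdsWithin_le_nhds
  · have := lim_exp_sub_one_div'.div_const 2
    apply this.congr
    intro x
    rw [div_div]
    ring_nf

lemma lim_K3 : Tendsto (fun s : ℝ => (Real.exp s * s - (Real.exp s - 1))/s^2) (𝓝[>] (0:ℝ)) (𝓝 (1/2)) := by
  apply HasDerivAt.lhopital_zero_nhdsGT (f' := fun s => Real.exp s * s) (g' := fun s => 2*s)
  · filter_upwards with x
    have h1 : HasDerivAt (fun s : ℝ => Real.exp s * s) (Real.exp x * x + Real.exp x) x := by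
      exact ((Real.hasDerivAt_exp x).mul (hasDerivAt_id x)).congr_deriv (by simp)
    have h2 : HasDerivAt (fun s : ℝ => Real.exp s - 1) (Real.exp x) x :=
      (Real.hasDerivAt_exp x).sub_const 1
    exact (h1.sub h2).congr_deriv (by ring)
  · filter_upwards with x
    simpa [mul_comm] using (hasDerivAt_pow 2 x)
  · filter_upwards [self_mem_nhdsWithin] with x hx
    have : (0:ℝ) < x := hx
    positivity
  · have h : Continuous fun s : ℝ => Real.exp s * s - (Real.exp s - 1) := by continuity
    have := h.tendsto 0
    simp only [Real.exp_zero] at this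
    norm_num at this
    exact this.mono_left nhdsWithin_le_nhds
  · have : Tendsto (fun s : ℝ => s^2) (𝓝 (0:ℝ)) (𝓝 0) := by
      simpa using (continuous_pow 2).tendsto (0:ℝ)
    exact this.mono_left nhdsWithin_le_nhds
  · have h : Tendsto (fun s : ℝ => Real.exp s / 2) (𝓝[>] (0:ℝ)) (𝓝 (1/2)) := by
      have := (Real.continuous_exp.tendsto 0).div_const 2
      simp only [Real.exp_zero] at this
      exact this.mono_left nhdsWithin_le_nhds
    apply h.congr'
    filter_upwards [self_mem_nhdsWithin] with x hx
    have hx' : x ≠ 0 := ne_of_gt hx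
    field_simp

noncomputable def uu (s : ℝ) : ℝ := (Real.exp s - 1)/s
noncomputable def uD (s : ℝ) : ℝ := (Real.exp s * s - (Real.exp s - 1))/s^2
noncomputable def PP (s : ℝ) : ℝ := Real.exp (-(uu s)) / (Real.exp s + 1)
noncomputable def PD (s : ℝ) : ℝ := Real.exp (-(uu s)) * (-(uD s)) / (Real.exp s + 1)
  - Real.exp (-(uu s)) * Real.exp s / (Real.exp s + 1)^2
noncomputable def eps (a s : ℝ) : ℝ := PP s * (1 - Real.exp (-(a*s)))
noncomputable def epsD (a s : ℝ) : ℝ := PD s * (1 - Real.exp (-(a*s))) + PP s * (a * Real.exp (-(a*s)))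

lemma hasDerivAt_eps (a : ℝ) {s : ℝ} (hs : s ≠ 0) : HasDerivAt (eps a) (epsD a s) s := by
  have hu : HasDerivAt uu (uD s) s := by
    have h1 : HasDerivAt (fun t : ℝ => Real.exp t - 1) (Real.exp s) s :=
      (Real.hasDerivAt_exp s).sub_const 1
    have h2 : HasDerivAt (fun t : ℝ => t) 1 s := hasDerivAt_id s
    have h := h1.div h2 hs
    have : HasDerivAt uu ((Real.exp s * s - (Real.exp s - 1) * 1) / s ^ 2) s := h
    simpa [uD] using this
  have hP : HasDerivAt PP (PD s) s := by
    have he : HasDerivAt (fun t => Real.exp (-(uu t))) (Real.exp (-(uu s)) * (-(uD s))) s := by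
      have := (Real.hasDerivAt_exp (-(uu s))).comp s hu.neg
      exact this.congr_deriv (by ring)
    have hd : HasDerivAt (fun t : ℝ => Real.exp t + 1) (Real.exp s) s :=
      (Real.hasDerivAt_exp s).add_const 1
    have hne : Real.exp s + 1 ≠ 0 := by positivity
    have h := he.div hd hne
    refine h.congr_deriv ?_
    unfold PD
    field_simp
  have hv : HasDerivAt (fun t => 1 - Real.exp (-(a*t))) (a * Real.exp (-(a*s))) s := by
    have h1 : HasDerivAt (fun t : ℝ => -(a*t)) (-a) s := by
      exact ((hasDerivAt_id s).const_mul a).neg.congr_deriv (by simp)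
    have h2 := (Real.hasDerivAt_exp (-(a*s))).comp s h1
    have h3 := h2.const_sub 1
    exact h3.congr_deriv (by ring)
  have h := hP.mul hv
  exact h

lemma uu_gt_one {s : ℝ} (hs : 0 < s) : 1 < uu s := by
  have h := Real.add_one_lt_exp (ne_of_gt hs)
  rw [uu, lt_div_iff₀ hs]
  linarith

lemma PP_pos (s : ℝ) : 0 < PP s := by
  unfold PP; positivity

lemma eps_pos {a s : ℝ} (ha : 0 < a) (hs : 0 < s) : 0 < eps a s := by
  unfold eps
  have h2 : Real.exp (-(a*s)) < 1 := by
    rw [Real.exp_lt_one_iff]; nlinarith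
  have := PP_pos s
  nlinarith

lemma eps_lt_half {a s : ℝ} (hs : 0 < s) : eps a s < 1/2 := by
  unfold eps
  have h1 : Real.exp (-(uu s)) < 1 := by
    rw [Real.exp_lt_one_iff]; linarith [uu_gt_one hs]
  have h2 : (2:ℝ) < Real.exp s + 1 := by
    have := Real.add_one_lt_exp (ne_of_gt hs); linarith
  have h3 : PP s < 1/2 := by
    unfold PP
    rw [div_lt_iff₀ (by positivity)]
    nlinarith
  have h4 : 1 - Real.exp (-(a*s)) ≤ 1 := by
    have := Real.exp_pos (-(a*s)); linarith
  have h5 : 0 < PP s := PP_pos s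
  nlinarith [Real.exp_pos (-(a*s))]

lemma tendsto_ne_comp {f g : ℝ → ℝ} {l : ℝ}
    (hf0 : Tendsto f (𝓝[>] (0:ℝ)) (𝓝 0)) (hne : ∀ᶠ s in 𝓝[>] (0:ℝ), f s ≠ 0)
    (hg : Tendsto g (𝓝[≠] (0:ℝ)) (𝓝 l)) : Tendsto (fun s => g (f s)) (𝓝[>] (0:ℝ)) (𝓝 l) := by
  apply hg.comp
  rw [tendsto_nhdsWithin_iff]
  exact ⟨hf0, by filter_upwards [hne] with s hs using hs⟩

lemma lim_u : Tendsto uu (𝓝[>] (0:ℝ)) (𝓝 1) := lim_exp_sub_one_div'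

lemma lim_uD : Tendsto uD (𝓝[>] (0:ℝ)) (𝓝 (1/2)) := lim_K3

lemma lim_u_slope : Tendsto (fun s => (uu s - 1)/s) (𝓝[>] (0:ℝ)) (𝓝 (1/2)) := by
  apply lim_K2.congr'
  filter_upwards [self_mem_nhdsWithin] with s hs
  have hs' : s ≠ 0 := ne_of_gt hs
  have h1 : uu s - 1 = (Real.exp s - 1 - s)/s := by
    rw [uu]; field_simp
  rw [h1, div_div, ← pow_two]

lemma lim_expneg : Tendsto (fun s => Real.exp (-(uu s))) (𝓝[>] (0:ℝ)) (𝓝 (Real.exp (-1))) :=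
  (Real.continuous_exp.tendsto _).comp lim_u.neg

lemma lim_expneg_slope :
    Tendsto (fun s => (Real.exp (-(uu s)) - Real.exp (-1))/s) (𝓝[>] (0:ℝ))
      (𝓝 (-Real.exp (-1)/2)) := by
  have hcomp : Tendsto (fun s => (Real.exp (1 - uu s) - 1)/(1 - uu s)) (𝓝[>] (0:ℝ)) (𝓝 1) := by
    apply tendsto_ne_comp (f := fun s => 1 - uu s) (g := fun t => (Real.exp t - 1)/t)
    · have := lim_u.const_sub 1
      simpa using this
    · filter_upwards [self_mem_nhdsWithin] with s hs
      have := uu_gt_one hs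
      intro h; linarith [sub_eq_zero.mp h]
    · exact lim_exp_sub_one_div
  have hmain := (hcomp.const_mul (Real.exp (-1))).mul (lim_u_slope.neg)
  have hval : Real.exp (-1) * 1 * -(1/2) = -Real.exp (-1)/2 := by ring
  rw [hval] at hmain
  apply hmain.congr'
  filter_upwards [self_mem_nhdsWithin] with s hs
  have hs' : s ≠ 0 := ne_of_gt hs
  have hu1 : 1 - uu s ≠ 0 := by
    have := uu_gt_one hs; intro h; linarith [sub_eq_zero.mp h]
  have key : Real.exp (-1) * (Real.exp (1 - uu s) - 1) = Real.exp (-(uu s)) - Real.exp (-1) := by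
    have harg : (-1:ℝ) + (1 - uu s) = -(uu s) := by ring
    rw [mul_sub, ← Real.exp_add, mul_one, harg]
  have h2 : Real.exp (-1) * ((Real.exp (1 - uu s) - 1)/(1 - uu s)) * -((uu s - 1)/s)
      = (Real.exp (-1) * (Real.exp (1 - uu s) - 1))/s := by
    field_simp
    ring
  rw [h2, key]

lemma lim_P : Tendsto PP (𝓝[>] (0:ℝ)) (𝓝 (Real.exp (-1)/2)) := by
  have hd : Tendsto (fun s : ℝ => Real.exp s + 1) (𝓝[>] (0:ℝ)) (𝓝 2) := by
    have : Tendsto (fun s : ℝ => Real.exp s + 1) (𝓝 (0:ℝ)) (𝓝 2) := by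
      have := (Real.continuous_exp.tendsto 0).add_const 1
      norm_num at this; exact this
    exact this.mono_left nhdsWithin_le_nhds
  exact lim_expneg.div hd two_ne_zero

lemma lim_P_slope :
    Tendsto (fun s => (PP s - Real.exp (-1)/2)/s) (𝓝[>] (0:ℝ)) (𝓝 (-Real.exp (-1)/2)) := by
  have hd : Tendsto (fun s : ℝ => Real.exp s + 1) (𝓝[>] (0:ℝ)) (𝓝 2) := by
    have : Tendsto (fun s : ℝ => Real.exp s + 1) (𝓝 (0:ℝ)) (𝓝 2) := by
      have := (Real.continuous_exp.tendsto 0).add_const 1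
      norm_num at this; exact this
    exact this.mono_left nhdsWithin_le_nhds
  have hinv1 : Tendsto (fun s : ℝ => 1/(Real.exp s + 1)) (𝓝[>] (0:ℝ)) (𝓝 (1/2)) := by
    have := hd.inv₀ two_ne_zero
    simpa [one_div] using this
  have hinv2 : Tendsto (fun s : ℝ => 1/(2*(Real.exp s + 1))) (𝓝[>] (0:ℝ)) (𝓝 (1/4)) := by
    have := (hd.const_mul 2).inv₀ (by norm_num : (2:ℝ)*2 ≠ 0)
    norm_num at this
    simpa [one_div] using this
  have h1 := lim_expneg_slope.mul hinv1
  have h2 := (lim_exp_sub_one_div'.mul hinv2).const_mul (Real.exp (-1))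
  have hmain := h1.sub h2
  have hval : -Real.exp (-1)/2 * (1/2) - Real.exp (-1) * (1 * (1/4)) = -Real.exp (-1)/2 := by ring
  rw [hval] at hmain
  apply hmain.congr'
  filter_upwards [self_mem_nhdsWithin] with s hs
  have hs' : s ≠ 0 := ne_of_gt hs
  have hne : Real.exp s + 1 ≠ 0 := by positivity
  unfold PP
  field_simp
  ring

lemma lim_vdiv {a : ℝ} (ha : 0 < a) :
    Tendsto (fun s => (1 - Real.exp (-(a*s)))/s) (𝓝[>] (0:ℝ)) (𝓝 a) := by
  have hcomp : Tendsto (fun s => (Real.exp (-(a*s)) - 1)/(-(a*s))) (𝓝[>] (0:ℝ)) (𝓝 1) := by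
    apply tendsto_ne_comp (f := fun s => -(a*s)) (g := fun t => (Real.exp t - 1)/t)
    · have hc : Continuous fun s : ℝ => -(a*s) := by continuity
      have h := hc.tendsto 0
      norm_num at h
      exact h.mono_left nhdsWithin_le_nhds
    · filter_upwards [self_mem_nhdsWithin] with s hs
      have hs0 : (0:ℝ) < s := hs
      have : (0:ℝ) < a * s := by positivity
      intro h; rw [neg_eq_zero] at h; linarith
    · exact lim_exp_sub_one_div
  have hmain := hcomp.const_mul a
  rw [mul_one] at hmain
  apply hmain.congr'
  filter_upwards [self_mem_nhdsWithin] with s hs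
  have hs' : s ≠ 0 := ne_of_gt hs
  have ha' : a ≠ 0 := ne_of_gt ha
  field_simp
  ring

lemma lim_v_slope {a : ℝ} (ha : 0 < a) :
    Tendsto (fun s => (a * Real.exp (-(a*s)) - a)/s) (𝓝[>] (0:ℝ)) (𝓝 (-a^2)) := by
  have := (lim_vdiv ha).const_mul (-a)
  have hval : -a * a = -a^2 := by ring
  rw [hval] at this
  apply this.congr'
  filter_upwards [self_mem_nhdsWithin] with s hs
  have hs' : s ≠ 0 := ne_of_gt hs
  field_simp
  ring

lemma lim_PD : Tendsto PD (𝓝[>] (0:ℝ)) (𝓝 (-Real.exp (-1)/2)) := by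
  have hd : Tendsto (fun s : ℝ => Real.exp s + 1) (𝓝[>] (0:ℝ)) (𝓝 2) := by
    have : Tendsto (fun s : ℝ => Real.exp s + 1) (𝓝 (0:ℝ)) (𝓝 2) := by
      have := (Real.continuous_exp.tendsto 0).add_const 1
      norm_num at this; exact this
    exact this.mono_left nhdsWithin_le_nhds
  have hexp : Tendsto (fun s : ℝ => Real.exp s) (𝓝[>] (0:ℝ)) (𝓝 1) := by
    have := Real.continuous_exp.tendsto 0
    norm_num at this
    exact this.mono_left nhdsWithin_le_nhds
  have h1 := (lim_expneg.mul lim_uD.neg).div hd two_ne_zero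
  have h2 := (lim_expneg.mul hexp).div (hd.pow 2) (by norm_num : (2:ℝ)^2 ≠ 0)
  have hmain := h1.sub h2
  have hval : Real.exp (-1) * -(1/2) / 2 - Real.exp (-1) * 1 / 2^2 = -Real.exp (-1)/2 := by ring
  rw [hval] at hmain
  exact hmain

lemma lim_eps_div {a : ℝ} (ha : 0 < a) :
    Tendsto (fun s => eps a s / s) (𝓝[>] (0:ℝ)) (𝓝 (a * Real.exp (-1)/2)) := by
  have hmain := lim_P.mul (lim_vdiv ha)
  have hval : Real.exp (-1)/2 * a = a * Real.exp (-1)/2 := by ring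
  rw [hval] at hmain
  apply hmain.congr'
  filter_upwards [self_mem_nhdsWithin] with s hs
  unfold eps
  rw [mul_div_assoc]

lemma lim_eps0 {a : ℝ} (ha : 0 < a) : Tendsto (fun s => eps a s) (𝓝[>] (0:ℝ)) (𝓝 0) := by
  have hv : Tendsto (fun s : ℝ => 1 - Real.exp (-(a*s))) (𝓝[>] (0:ℝ)) (𝓝 0) := by
    have : Tendsto (fun s : ℝ => 1 - Real.exp (-(a*s))) (𝓝 (0:ℝ)) (𝓝 0) := by
      have hc : Continuous (fun s : ℝ => 1 - Real.exp (-(a*s))) := by continuity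
      have := hc.tendsto 0
      norm_num at this; exact this
    exact this.mono_left nhdsWithin_le_nhds
  have := lim_P.mul hv
  norm_num at this
  exact this

lemma lim_epsD_slope {a : ℝ} (ha : 0 < a) :
    Tendsto (fun s => (epsD a s - a * Real.exp (-1)/2)/s) (𝓝[>] (0:ℝ))
      (𝓝 (-(2*a+a^2) * Real.exp (-1)/2)) := by
  have h1 := lim_PD.mul (lim_vdiv ha)
  have h2 := lim_P.mul (lim_v_slope ha)
  have h3 := lim_P_slope.const_mul a
  have hmain := (h1.add h2).add h3
  have hval : -Real.exp (-1)/2 * a + Real.exp (-1)/2 * -a^2 + a * (-Real.exp (-1)/2)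
      = -(2*a+a^2) * Real.exp (-1)/2 := by ring
  rw [hval] at hmain
  apply hmain.congr'
  filter_upwards [self_mem_nhdsWithin] with s hs
  have hs' : s ≠ 0 := ne_of_gt hs
  unfold epsD
  field_simp
  ring

lemma value_identity (c A1 B1 l Dv w : ℝ) (hw : w ≠ 0) (hden : A1 - l ≠ 0) :
    c * (((A1+B1+2*(-l))*(A1+(-l)) - (-l)*(A1+B1+(-l)))/(A1+(-l))^2) * (Dv/w)
      = -c * ((-(-Dv/w) * (A1 - l) - (A1+B1-l) * -(-Dv/w))/(A1-l)^2) * l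
        + -c * ((A1+B1-l)/(A1-l)) * (-Dv/w) := by
  have h2 : A1 + -l ≠ 0 := by rw [← sub_eq_add_neg]; exact hden
  field_simp
  ring

set_option maxHeartbeats 2000000 in

/-- With no channel knowledge at the transmitter and the optimal fixed
rate `λ(snr) = snr/log 2`, the ON–OFF Markov fluid source achieves minimum energy per
bit `lim_{snr→0⁺} snr / r(snr) = 2e·log 2`, and the throughput `r` is twice
differentiable (from the right) at `snr = 0` with wideband slope
`S₀ = −2·(r'(0))²·log 2 / r''(0) = 1 / (θ·(ζ − 1)/(2·log 2) + θ·e/log 2 + 2e)`,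
where `ζ = 2β/(α(α + β))`. -/
theorem no_CSI_energy_efficiency_markov_fluid
    (θ α β : ℝ) (hθ : 0 < θ) (hα : 0 < α) (hβ : 0 < β)
    (Pon : ℝ) (hPon : Pon = α / (α + β))
    (ζ : ℝ) (hζ : ζ = 2 * β / (α * (α + β)))
    (lam : ℝ → ℝ) (hlam : ∀ snr, lam snr = snr / Real.log 2)
    (P : ℝ → ℝ)
    (hP : ∀ snr, P snr =
      Real.exp (-(((2 : ℝ) ^ lam snr - 1) / snr)) / ((2 : ℝ) ^ lam snr + 1))
    (g : ℝ → ℝ)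
    (hg : ∀ snr, g snr = 1 - P snr * (1 - Real.exp (-θ * lam snr)))
    (r : ℝ → ℝ)
    (hr : ∀ snr, r snr = -(Pon / θ) *
      ((α + β - Real.log (g snr)) / (α - Real.log (g snr))) * Real.log (g snr)) :
    Filter.Tendsto (fun snr => snr / r snr) (nhdsWithin 0 (Set.Ioi 0))
      (nhds (2 * Real.exp 1 * Real.log 2)) ∧
    ∃ r' : ℝ → ℝ, ∃ d2 : ℝ,
      (∀ᶠ snr in nhdsWithin 0 (Set.Ici 0), HasDerivWithinAt r (r' snr) (Set.Ici 0) snr) ∧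
      HasDerivWithinAt r' d2 (Set.Ici 0) 0 ∧
      -2 * (r' 0) ^ 2 * Real.log 2 / d2
        = 1 / (θ * (ζ - 1) / (2 * Real.log 2)
            + θ * Real.exp 1 / Real.log 2 + 2 * Real.exp 1) := by

  have hc : (0:ℝ) < Real.log 2 := Real.log_pos (by norm_num)
  have hcne : Real.log 2 ≠ 0 := ne_of_gt hc
  set a : ℝ := θ / Real.log 2 with ha_def
  have ha : 0 < a := div_pos hθ hc
  have hab : (0:ℝ) < α + β := by linarith
  -- identification of g with 1 - eps a
  have hpow : ∀ s : ℝ, (2:ℝ) ^ lam s = Real.exp s := by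
    intro s
    rw [hlam, Real.rpow_def_of_pos (by norm_num : (0:ℝ) < 2)]
    congr 1
    field_simp
  have hgeq : ∀ s, g s = 1 - eps a s := by
    intro s
    rw [hg s, hP s, hpow s, hlam s]
    have h1 : -θ * (s / Real.log 2) = -(a*s) := by
      rw [ha_def]; field_simp
    rw [h1]
    rfl
  set E : ℝ := Real.exp (-1) with hE
  have hEpos : 0 < E := Real.exp_pos _
  set A : ℝ := a * E / 2 with hA
  have hApos : 0 < A := by positivity
  set B2 : ℝ := -(2*a+a^2) * E / 2 with hB2
  -- basic positivity facts for s > 0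
  have heps : ∀ s : ℝ, 0 < s → 0 < eps a s ∧ eps a s < 1/2 :=
    fun s hs => ⟨eps_pos ha hs, eps_lt_half hs⟩
  have hlog_neg : ∀ s : ℝ, 0 < s → Real.log (1 - eps a s) < 0 := by
    intro s hs
    obtain ⟨h1, h2⟩ := heps s hs
    exact Real.log_neg (by linarith) (by linarith)
  -- limit of log(1 - eps a s)/s
  have hlog0 : Tendsto (fun s => Real.log (1 - eps a s)) (𝓝[>] (0:ℝ)) (𝓝 0) := by
    have hcont : ContinuousAt Real.log 1 := Real.continuousAt_log one_ne_zero
    have h1 : Tendsto (fun s => 1 - eps a s) (𝓝[>] (0:ℝ)) (𝓝 1) := by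
      have := (lim_eps0 ha).const_sub 1
      norm_num at this; exact this
    have := hcont.tendsto.comp h1
    rw [Real.log_one] at this
    exact this
  have hL_div : Tendsto (fun s => Real.log (1 - eps a s)/s) (𝓝[>] (0:ℝ)) (𝓝 (-A)) := by
    have hcomp : Tendsto (fun s => Real.log (1 - eps a s)/(eps a s)) (𝓝[>] (0:ℝ)) (𝓝 (-1)) := by
      apply tendsto_ne_comp (f := fun s => eps a s) (g := fun t => Real.log (1 - t)/t)
      · exact lim_eps0 ha
      · filter_upwards [self_mem_nhdsWithin] with s hs
        exact ne_of_gt (eps_pos ha hs)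
      · exact lim_log_one_sub
    have hmain := hcomp.mul (lim_eps_div ha)
    have hval : (-1 : ℝ) * (a * Real.exp (-1)/2) = -A := by rw [hA, hE]; ring
    rw [hval] at hmain
    apply hmain.congr'
    filter_upwards [self_mem_nhdsWithin] with s hs
    have hs' : s ≠ 0 := ne_of_gt (show (0:ℝ) < s from hs)
    have he' : eps a s ≠ 0 := ne_of_gt (eps_pos ha hs)
    field_simp
  -- r 0 = 0
  have heps0 : eps a 0 = 0 := by simp [eps]
  have hg0 : Real.log (g 0) = 0 := by rw [hgeq, heps0]; norm_num
  have hr0 : r 0 = 0 := by rw [hr, hg0]; ring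
  -- slope limit of r at 0
  have hc0 : Pon / θ * ((α+β)/α) = 1/θ := by
    rw [hPon]; field_simp
  have hslope_r : Tendsto (fun s => r s / s) (𝓝[>] (0:ℝ)) (𝓝 (A/θ)) := by
    have hfrac : Tendsto (fun s => (α + β - Real.log (1 - eps a s))/(α - Real.log (1 - eps a s)))
        (𝓝[>] (0:ℝ)) (𝓝 ((α+β)/α)) := by
      have h1 := hlog0.const_sub (α + β)
      have h2 := hlog0.const_sub α
      norm_num at h1 h2
      exact h1.div h2 (ne_of_gt hα)
    have hmain := ((hfrac.const_mul (-(Pon/θ))).mul hL_div)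
    have hval : -(Pon/θ) * ((α+β)/α) * (-A) = A/θ := by
      linear_combination A * hc0
    rw [hval] at hmain
    apply hmain.congr'
    filter_upwards [self_mem_nhdsWithin] with s hs
    rw [hr s, hgeq s]
    ring
  have hAθ : A/θ ≠ 0 := by positivity
  constructor
  · -- first conjunct
    have := hslope_r.inv₀ hAθ
    have hval : (A/θ)⁻¹ = 2 * Real.exp 1 * Real.log 2 := by
      rw [hA, hE, ha_def, Real.exp_neg]
      have he1 : Real.exp 1 ≠ 0 := ne_of_gt (Real.exp_pos 1)
      field_simp
    rw [hval] at this
    apply this.congr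
    intro s
    rw [inv_div]
  · -- second conjunct
    set q : ℝ → ℝ := fun s => epsD a s / (1 - eps a s) with hq_def
    set Lf : ℝ → ℝ := fun s => -Real.log (1 - eps a s) with hLf_def
    set F' : ℝ → ℝ := fun x => (Pon/θ) * (((α+β+2*x)*(α+x) - x*(α+β+x))/(α+x)^2) with hF'_def
    set r' : ℝ → ℝ := fun s => if s = 0 then A/θ else F' (Lf s) * q s with hr'_def
    have hr'0 : r' 0 = A/θ := by rw [hr'_def]; exact if_pos rfl
    -- derivative of r at 0 from the right
    have hDer0 : HasDerivWithinAt r (A/θ) (Set.Ici 0) 0 := by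
      rw [hasDerivWithinAt_iff_tendsto_slope, Set.Ici_sdiff_left]
      apply hslope_r.congr
      intro s
      simp [slope_fun_def, hr0, div_eq_inv_mul]
    -- derivative of r at s > 0
    have hrfun : ∀ t, r t = -(Pon/θ) *
        ((α + β - Real.log (1 - eps a t))/(α - Real.log (1 - eps a t))) *
        Real.log (1 - eps a t) := by
      intro t; rw [hr t, hgeq t]
    have hDerPos : ∀ s : ℝ, 0 < s → HasDerivAt r (F' (Lf s) * q s) s := by
      intro s hs
      obtain ⟨he1, he2⟩ := heps s hs
      have h1me : (0:ℝ) < 1 - eps a s := by linarith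
      have hln : Real.log (1 - eps a s) < 0 := hlog_neg s hs
      have hden : α - Real.log (1 - eps a s) ≠ 0 := ne_of_gt (by linarith)
      have hE1 : HasDerivAt (fun t => 1 - eps a t) (-(epsD a s)) s :=
        (hasDerivAt_eps a (ne_of_gt hs)).const_sub 1
      have hLog : HasDerivAt (fun t => Real.log (1 - eps a t))
          (-(epsD a s)/(1 - eps a s)) s := by
        have h := (Real.hasDerivAt_log (ne_of_gt h1me)).comp s hE1
        exact h.congr_deriv (by ring)
      have hNum : HasDerivAt (fun t => α + β - Real.log (1 - eps a t))
          (-(-(epsD a s)/(1 - eps a s))) s := hLog.const_sub (α+β)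
      have hDen : HasDerivAt (fun t => α - Real.log (1 - eps a t))
          (-(-(epsD a s)/(1 - eps a s))) s := hLog.const_sub α
      have hDiv := hNum.div hDen hden
      have hMul := (hDiv.const_mul (-(Pon/θ))).mul hLog
      rw [show r = _ from funext hrfun]
      have h2 : F' (Lf s) * q s =
          -(Pon/θ) * ((-(-(epsD a s)/(1 - eps a s)) * (α - Real.log (1 - eps a s)) -
              (α + β - Real.log (1 - eps a s)) * -(-(epsD a s)/(1 - eps a s))) /
            (α - Real.log (1 - eps a s))^2) * Real.log (1 - eps a s) +
          -(Pon/θ) * ((α + β - Real.log (1 - eps a s)) / (α - Real.log (1 - eps a s))) *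
            (-(epsD a s)/(1 - eps a s)) := by
        rw [hF'_def, hLf_def, hq_def]
        exact value_identity (Pon/θ) α β (Real.log (1 - eps a s)) (epsD a s)
          (1 - eps a s) (ne_of_gt h1me) hden
      rw [h2]
      exact hMul
    refine ⟨r', (B2 + A^2)/θ - ζ*A^2/θ, ?_, ?_, ?_⟩
    · -- eventual derivative
      filter_upwards [self_mem_nhdsWithin] with s hs
      rcases eq_or_lt_of_le (Set.mem_Ici.mp hs) with h|h
      · rw [← h, hr'0]
        exact hDer0
      · have h1 : r' s = F' (Lf s) * q s := by rw [hr'_def]; exact if_neg (ne_of_gt h)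
        rw [h1]
        exact (hDerPos s h).hasDerivWithinAt
    · -- second derivative at 0
      have hLf0 : Tendsto Lf (𝓝[>] (0:ℝ)) (𝓝 0) := by
        have := hlog0.neg
        norm_num at this
        exact this
      have hLf_div : Tendsto (fun s => Lf s / s) (𝓝[>] (0:ℝ)) (𝓝 A) := by
        have h := hL_div.neg
        norm_num at h
        apply h.congr
        intro s
        rw [hLf_def, neg_div]
      have hLf_ne : ∀ s:ℝ, 0 < s → Lf s ≠ 0 := by
        intro s hs
        have := hlog_neg s hs
        rw [hLf_def]
        simp only [ne_eq, neg_eq_zero]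
        exact ne_of_lt this
      have hF'deriv : HasDerivAt F' (-ζ/θ) 0 := by
        have h2 : HasDerivAt (fun x : ℝ => α+x) 1 0 := by
          simpa using (hasDerivAt_id (0:ℝ)).const_add α
        have h1 : HasDerivAt (fun x : ℝ => α+β+2*x) 2 0 := by
          have := ((hasDerivAt_id (0:ℝ)).const_mul 2).const_add (α+β)
          simpa using this
        have h2b : HasDerivAt (fun x : ℝ => α+β+x) 1 0 := by
          simpa using (hasDerivAt_id (0:ℝ)).const_add (α+β)
        have h12 := h1.mul h2
        have h3 := (hasDerivAt_id (0:ℝ)).mul h2b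
        have hnum := h12.sub h3
        have hden2 := h2.pow 2
        have hq' := hnum.div hden2 (by simp; positivity)
        have hF := hq'.const_mul (Pon/θ)
        rw [hF'_def]
        refine hF.congr_deriv ?_
        simp only [id, Pi.pow_apply, Pi.mul_apply, Pi.sub_apply]
        rw [hζ, hPon]
        field_simp
        ring
      have hF'slope : Tendsto (fun s => (F' (Lf s) - F' 0)/(Lf s)) (𝓝[>] (0:ℝ)) (𝓝 (-ζ/θ)) := by
        have hs1 := hasDerivAt_iff_tendsto_slope.1 hF'deriv
        have hs2 : Tendsto (fun t => (F' t - F' 0)/t) (𝓝[≠] (0:ℝ)) (𝓝 (-ζ/θ)) := by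
          apply hs1.congr
          intro t
          simp [slope_fun_def, div_eq_inv_mul]
        apply tendsto_ne_comp (f := Lf) (g := fun t => (F' t - F' 0)/t) hLf0 ?_ hs2
        filter_upwards [self_mem_nhdsWithin] with s hs using hLf_ne s hs
      have hF'cont : Tendsto (fun s => F' (Lf s)) (𝓝[>] (0:ℝ)) (𝓝 (F' 0)) :=
        (hF'deriv.continuousAt.tendsto).comp hLf0
      have hF'0 : F' 0 = 1/θ := by
        rw [hF'_def]
        simp only
        rw [hPon]
        field_simp
        ring
      have hinv : Tendsto (fun s => 1/(1 - eps a s)) (𝓝[>] (0:ℝ)) (𝓝 1) := by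
        have h1 : Tendsto (fun s => 1 - eps a s) (𝓝[>] (0:ℝ)) (𝓝 1) := by
          have := (lim_eps0 ha).const_sub 1
          norm_num at this
          exact this
        have h2 := h1.inv₀ one_ne_zero
        norm_num at h2
        simpa [one_div] using h2
      have hq_slope : Tendsto (fun s => (q s - A)/s) (𝓝[>] (0:ℝ)) (𝓝 (B2 + A^2)) := by
        have hD := lim_epsD_slope ha
        have h2 := ((lim_eps_div ha).const_mul A).mul hinv
        have hmain := (hD.mul hinv).add h2
        have hval : -(2*a+a^2) * Real.exp (-1)/2 * 1 + A * (a * Real.exp (-1)/2) * 1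
            = B2 + A^2 := by rw [hB2, hA, hE]; ring
        rw [hval] at hmain
        apply hmain.congr'
        filter_upwards [self_mem_nhdsWithin] with s hs
        have hs' : s ≠ 0 := ne_of_gt (show (0:ℝ) < s from hs)
        obtain ⟨he1, he2⟩ := heps s hs
        have h1me : (1:ℝ) - eps a s ≠ 0 := by linarith
        have hAE : a * Real.exp (-1)/2 = A := by rw [hA, hE]
        have hqs : q s = epsD a s / (1 - eps a s) := by rw [hq_def]
        rw [hqs, hA, hE]
        field_simp
        ring
      have hslope_r' : Tendsto (fun s => (F' (Lf s) * q s - A/θ)/s) (𝓝[>] (0:ℝ))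
          (𝓝 ((B2 + A^2)/θ - ζ*A^2/θ)) := by
        have hmain := (hF'cont.mul hq_slope).add ((hF'slope.mul hLf_div).const_mul A)
        have hval : F' 0 * (B2 + A^2) + A * (-ζ/θ * A) = (B2+A^2)/θ - ζ*A^2/θ := by
          rw [hF'0]; ring
        rw [hval] at hmain
        apply hmain.congr'
        filter_upwards [self_mem_nhdsWithin] with s hs
        have hLfne := hLf_ne s hs
        have hsne : s ≠ 0 := ne_of_gt (show (0:ℝ) < s from hs)
        have hAθ' : A/θ = F' 0 * A := by rw [hF'0]; ring
        rw [hAθ']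
        field_simp
        ring
      rw [hasDerivWithinAt_iff_tendsto_slope, Set.Ici_sdiff_left]
      apply hslope_r'.congr'
      filter_upwards [self_mem_nhdsWithin] with s hs
      have hsne : s ≠ 0 := ne_of_gt (show (0:ℝ) < s from hs)
      have h1 : r' s = F' (Lf s) * q s := by rw [hr'_def]; exact if_neg hsne
      simp [slope_fun_def, h1, hr'0, div_eq_inv_mul]
    · -- final algebraic identity
      rw [hr'0]
      have he1 : (0:ℝ) < Real.exp 1 := Real.exp_pos 1
      have hE1 : E < 1 := by
        rw [hE]
        exact Real.exp_lt_one_iff.mpr (by norm_num)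
      have hζpos : 0 < ζ := by rw [hζ]; positivity
      have hdenR : 0 < θ*(ζ-1)/(2*Real.log 2) + θ*Real.exp 1/Real.log 2 + 2*Real.exp 1 := by
        have hcomb : θ*(ζ-1)/(2*Real.log 2) + θ*Real.exp 1/Real.log 2
            = θ*(ζ-1+2*Real.exp 1)/(2*Real.log 2) := by field_simp
        rw [hcomb]
        have hee : (2.7182818283:ℝ) < Real.exp 1 := Real.exp_one_gt_d9
        have h1 : 0 < ζ-1+2*Real.exp 1 := by linarith
        positivity
      have hd2neg : (B2 + A^2)/θ - ζ*A^2/θ < 0 := by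
        have hnum : B2 + A^2 - ζ*A^2 < 0 := by
          rw [hB2, hA]
          nlinarith [mul_pos ha ha, mul_pos (mul_pos ha ha) hEpos, sq_nonneg (a*E),
            mul_pos hζpos (mul_pos (mul_pos ha ha) (mul_pos hEpos hEpos))]
        have : (B2 + A^2)/θ - ζ*A^2/θ = (B2 + A^2 - ζ*A^2)/θ := by ring
        rw [this]
        exact div_neg_of_neg_of_pos hnum hθ
      rw [div_eq_div_iff (ne_of_lt hd2neg) (ne_of_gt hdenR)]
      rw [hB2, hA, hζ, hE, Real.exp_neg, ha_def]
      field_simp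
      ring
end
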